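/- There is a constant C > 0 such that for all sufficiently large n there exists a 4-edge-colouring of K_n with colours {1,2,3,4} containing no triangle whose three edges are coloured with the three colours 1, 2, 3 (one edge of each), such that every set of vertices on which at least one of the four colours is missing has size at most C·n^{1/3}·(log n)^2. In particular, h_4(n, c') = O(n^{1/3} (log n)^2), where c' is the rainbow triangle coloured with colours 1, 2, 3. -/

import Mathlib

/-- A set `X` is homogeneous for a 4-edge-colouring `c` of `K_n`
if some colour does not appear on pairs of distinct elements of `X`. -/
def IsHomog {n : ℕ} (c : Sym2 (Fin n) → Fin 4) (X : Finset (Fin n)) : Prop :=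
  ∃ i : Fin 4, ∀ x ∈ X, ∀ y ∈ X, x ≠ y → c s(x, y) ≠ i

/-- `c` contains a triangle whose three edges receive the three distinct
colours `0`, `1`, `2` (i.e. the first three of the four colours), one each. -/
def Has123Triangle {n : ℕ} (c : Sym2 (Fin n) → Fin 4) : Prop :=
  ∃ x y z : Fin n, x ≠ y ∧ y ≠ z ∧ x ≠ z ∧
    c s(x, y) ≠ c s(y, z) ∧ c s(y, z) ≠ c s(x, z) ∧ c s(x, y) ≠ c s(x, z) ∧
    (c s(x, y) : ℕ) < 3 ∧ (c s(y, z) : ℕ) < 3 ∧ (c s(x, z) : ℕ) < 3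

open Finset


lemma pow_mono_aux (t u D : ℕ) (h1 : t ≤ u) (h2 : u ≤ D) :
    2 ^ u * 3 ^ (D - u) ≤ 2 ^ t * 3 ^ (D - t) := by
  obtain ⟨d, rfl⟩ : ∃ d, u = t + d := ⟨u - t, by omega⟩
  have e2 : D - t = (D - (t + d)) + d := by omega
  rw [pow_add, e2, pow_add]
  calc 2 ^ t * 2 ^ d * 3 ^ (D - (t + d))
      ≤ 2 ^ t * 3 ^ d * 3 ^ (D - (t + d)) := by
        have := Nat.pow_le_pow_left (show 2 ≤ 3 by norm_num) d
        exact Nat.mul_le_mul_right _ (Nat.mul_le_mul_left _ this)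
    _ = 2 ^ t * (3 ^ (D - (t + d)) * 3 ^ d) := by ring

lemma ramsey3 (m : ℕ) : ∃ q : Sym2 (Fin m) → Fin 3,
    ∀ (S : Finset (Fin m)) (i : Fin 3),
      (∀ x ∈ S, ∀ y ∈ S, x ≠ y → q s(x, y) ≠ i) → S.card ≤ 4 * Nat.log 2 m + 19 := by
  classical
  set L := Nat.log 2 m with hL
  set k := 4 * L + 20 with hk
  by_cases hm : m < k
  · refine ⟨fun _ => 0, fun S i _ => ?_⟩
    have := S.card_le_univ
    simp only [card_univ, Fintype.card_fin] at this
    omega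
  push_neg at hm
  set t := (2 * L + 10) * (4 * L + 19) with ht
  set D := Fintype.card (Sym2 (Fin m)) with hD
  -- bound the number of bad colourings for a fixed (S, i)
  have key : ∀ (S : Finset (Fin m)) (i : Fin 3), S.card = k →
      (univ.filter (fun q : Sym2 (Fin m) → Fin 3 =>
        ∀ x ∈ S, ∀ y ∈ S, x ≠ y → q s(x, y) ≠ i)).card ≤ 2 ^ t * 3 ^ (D - t) := by
    intro S i hS
    set T := S.offDiag.image (fun p => s(p.1, p.2)) with hT
    have hTD : T.card ≤ D := by
      have := T.card_le_univ; simpa [hD, card_univ] using this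
    have hTcard : t ≤ T.card := by
      have hfib : S.offDiag.card ≤ 2 * T.card := by
        apply Finset.card_le_mul_card_image
        intro a ha
        induction a using Sym2.inductionOn with
        | hf u v =>
          have hsub : S.offDiag.filter (fun p => s(p.1, p.2) = s(u, v)) ⊆ {(u, v), (v, u)} := by
            intro p hp
            simp only [mem_filter] at hp
            rw [Sym2.eq_iff] at hp
            rcases hp.2 with ⟨h1, h2⟩ | ⟨h1, h2⟩
            · simp [Finset.mem_insert, Prod.ext_iff, h1, h2]
            · simp [Finset.mem_insert, Prod.ext_iff, h1, h2]
          exact le_trans (card_le_card hsub) (le_trans (Finset.card_insert_le _ _) (by simp))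
      rw [Finset.offDiag_card, hS] at hfib
      have hkk : k * k = 2 * t + k := by rw [hk, ht]; ring
      omega
    have hsub : (univ.filter (fun q : Sym2 (Fin m) → Fin 3 =>
        ∀ x ∈ S, ∀ y ∈ S, x ≠ y → q s(x, y) ≠ i)) ⊆
        Fintype.piFinset (fun e => if e ∈ T then ({i}ᶜ : Finset (Fin 3)) else univ) := by
      intro q hq
      simp only [mem_filter, mem_univ, true_and] at hq
      rw [Fintype.mem_piFinset]
      intro e
      by_cases he : e ∈ T
      · simp only [he, if_true, mem_compl, mem_singleton]
        rw [hT] at he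
        obtain ⟨p, hp, rfl⟩ := mem_image.mp he
        rw [mem_offDiag] at hp
        exact hq _ hp.1 _ hp.2.1 hp.2.2
      · simp [he]
    have hcardpi : (Fintype.piFinset
        (fun e => if e ∈ T then ({i}ᶜ : Finset (Fin 3)) else univ)).card
        = 2 ^ T.card * 3 ^ (D - T.card) := by
      rw [Fintype.card_piFinset]
      have : ∀ e : Sym2 (Fin m),
          ((if e ∈ T then ({i}ᶜ : Finset (Fin 3)) else univ)).card
          = if e ∈ T then 2 else 3 := by
        intro e; by_cases he : e ∈ T <;> simp [he, Finset.card_compl]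
      rw [Finset.prod_congr rfl (fun e _ => this e)]
      rw [Finset.prod_ite, Finset.prod_const, Finset.prod_const]
      congr 1
      · congr 1; rw [Finset.filter_mem_eq_inter, univ_inter]
      · congr 1
        have : univ.filter (fun e => e ∉ T) = univ \ T := by
          ext e; simp
        rw [this, card_sdiff_of_subset (subset_univ T), card_univ]
    calc (univ.filter _).card ≤ _ := card_le_card hsub
      _ = 2 ^ T.card * 3 ^ (D - T.card) := hcardpi
      _ ≤ 2 ^ t * 3 ^ (D - t) := pow_mono_aux t T.card D hTcard hTD
  have htD : t ≤ D := by
    have h2D : 2 * D = (m + 1) * m := by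
      rw [hD, Sym2.card, Fintype.card_fin, Nat.choose_two_right]
      have he : 2 ∣ (m + 1) * ((m + 1) - 1) := by
        rcases Nat.even_or_odd m with h | h
        · exact Dvd.dvd.mul_left (even_iff_two_dvd.mp (by simpa using h)) _
        · exact Dvd.dvd.mul_right (even_iff_two_dvd.mp (by simp [Nat.even_add_one, h, Nat.not_even_iff_odd.mpr h])) _
      rw [Nat.mul_div_cancel' he]
      simp
    have h2t : 2 * t ≤ 2 * D := by
      calc 2 * t = (4 * L + 20) * (4 * L + 19) := by rw [ht]; ring
        _ ≤ m * (m + 1) := Nat.mul_le_mul (by omega) (by omega)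
        _ = 2 * D := by rw [h2D]; ring
    omega
  -- union bound over all k-sets and colours
  set B := univ.filter (fun q : Sym2 (Fin m) → Fin 3 =>
    ∃ S : Finset (Fin m), S.card = k ∧
      ∃ i : Fin 3, ∀ x ∈ S, ∀ y ∈ S, x ≠ y → q s(x, y) ≠ i) with hB
  have hBsub : B ⊆ (powersetCard k (univ : Finset (Fin m))).biUnion (fun S =>
      (univ : Finset (Fin 3)).biUnion (fun i =>
        univ.filter (fun q : Sym2 (Fin m) → Fin 3 =>
          ∀ x ∈ S, ∀ y ∈ S, x ≠ y → q s(x, y) ≠ i))) := by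
    intro q hq
    simp only [hB, mem_filter, mem_univ, true_and] at hq
    obtain ⟨S, hS, i, hqi⟩ := hq
    rw [mem_biUnion]
    exact ⟨S, mem_powersetCard.mpr ⟨subset_univ S, hS⟩,
      mem_biUnion.mpr ⟨i, mem_univ i, mem_filter.mpr ⟨mem_univ q, hqi⟩⟩⟩
  have hBcard : B.card ≤ Nat.choose m k * (3 * (2 ^ t * 3 ^ (D - t))) := by
    calc B.card ≤ _ := card_le_card hBsub
      _ ≤ ∑ S ∈ powersetCard k (univ : Finset (Fin m)),
            ((univ : Finset (Fin 3)).biUnion (fun i =>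
              univ.filter (fun q : Sym2 (Fin m) → Fin 3 =>
                ∀ x ∈ S, ∀ y ∈ S, x ≠ y → q s(x, y) ≠ i))).card := card_biUnion_le
      _ ≤ ∑ _S ∈ powersetCard k (univ : Finset (Fin m)), (3 * (2 ^ t * 3 ^ (D - t))) := by
          apply Finset.sum_le_sum
          intro S hS
          calc _ ≤ ∑ i ∈ (univ : Finset (Fin 3)),
                (univ.filter (fun q : Sym2 (Fin m) → Fin 3 =>
                  ∀ x ∈ S, ∀ y ∈ S, x ≠ y → q s(x, y) ≠ i)).card := card_biUnion_le
            _ ≤ ∑ _i ∈ (univ : Finset (Fin 3)), (2 ^ t * 3 ^ (D - t)) :=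
                Finset.sum_le_sum (fun i _ => key S i (mem_powersetCard.mp hS).2)
            _ = 3 * (2 ^ t * 3 ^ (D - t)) := by
                rw [Finset.sum_const, card_univ, Fintype.card_fin, smul_eq_mul]
      _ = Nat.choose m k * (3 * (2 ^ t * 3 ^ (D - t))) := by
          rw [Finset.sum_const, card_powersetCard, card_univ, Fintype.card_fin, smul_eq_mul]
  have hineq : Nat.choose m k * (3 * (2 ^ t * 3 ^ (D - t))) < 3 ^ D := by
    have hc : Nat.choose m k ≤ 2 ^ ((L + 1) * k) := by
      calc Nat.choose m k ≤ m ^ k := Nat.choose_le_pow m k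
        _ ≤ (2 ^ (L + 1)) ^ k :=
            Nat.pow_le_pow_left (le_of_lt (Nat.lt_pow_succ_log_self (by norm_num) m)) k
        _ = 2 ^ ((L + 1) * k) := by rw [← pow_mul]
    have hu : t = 2 * ((L + 5) * (4 * L + 19)) := by rw [ht]; ring
    set u := (L + 5) * (4 * L + 19) with hudef
    have h8 : 2 ^ (3 * u) ≤ 3 ^ t := by
      rw [hu]
      calc 2 ^ (3 * u) = 8 ^ u := by rw [pow_mul]; norm_num
        _ ≤ 9 ^ u := Nat.pow_le_pow_left (by norm_num) u
        _ = 3 ^ (2 * u) := by rw [show (9:ℕ) = 3 ^ 2 by norm_num, ← pow_mul]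
    have h1 : (L + 1) * k + 2 ≤ u := by rw [hk, hudef]; nlinarith
    have hexp : (L + 1) * k + t + 2 ≤ 3 * u := by rw [hu]; linarith
    have hpos : 0 < 3 ^ (D - t) := Nat.pow_pos (by norm_num)
    calc Nat.choose m k * (3 * (2 ^ t * 3 ^ (D - t)))
        ≤ 2 ^ ((L + 1) * k) * (3 * (2 ^ t * 3 ^ (D - t))) :=
          Nat.mul_le_mul_right _ hc
      _ = 3 * 2 ^ ((L + 1) * k + t) * 3 ^ (D - t) := by rw [pow_add]; ring
      _ < 2 ^ ((L + 1) * k + t + 2) * 3 ^ (D - t) := by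
          apply Nat.mul_lt_mul_of_lt_of_le _ (le_refl _) hpos
          rw [pow_succ, pow_succ]
          have : 0 < 2 ^ ((L + 1) * k + t) := Nat.pow_pos (by norm_num)
          nlinarith
      _ ≤ 2 ^ (3 * u) * 3 ^ (D - t) :=
          Nat.mul_le_mul_right _ (Nat.pow_le_pow_right (by norm_num) hexp)
      _ ≤ 3 ^ t * 3 ^ (D - t) := Nat.mul_le_mul_right _ h8
      _ = 3 ^ D := by rw [← pow_add]; congr 1; omega
  have hcardU : (univ : Finset (Sym2 (Fin m) → Fin 3)).card = 3 ^ D := by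
    rw [card_univ, Fintype.card_fun, Fintype.card_fin, hD]
  have hex : ∃ q : Sym2 (Fin m) → Fin 3, q ∉ B := by
    by_contra h
    push_neg at h
    have : (univ : Finset (Sym2 (Fin m) → Fin 3)) ⊆ B := fun q _ => h q
    have := card_le_card this
    omega
  obtain ⟨q, hq⟩ := hex
  refine ⟨q, fun S i havoid => ?_⟩
  by_contra hSc
  push_neg at hSc
  obtain ⟨S', hS'sub, hS'card⟩ := exists_subset_card_eq (s := S) (n := k) (by omega)
  exact hq (mem_filter.mpr ⟨mem_univ q, S', hS'card, i,
    fun x hx y hy hxy => havoid x (hS'sub hx) y (hS'sub hy) hxy⟩)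


def emap1 : Fin 3 → Fin 4 := ![0, 1, 3]
def emap2 : Fin 3 → Fin 4 := ![1, 2, 3]
def emap3 : Fin 3 → Fin 4 := ![2, 0, 3]

lemma twelve_le_pow (p : ℕ) (hp : 7 ≤ p) : 12 * p + 19 ≤ 2 ^ p := by
  induction p, hp using Nat.le_induction with
  | base => norm_num
  | succ p hp ih =>
    have h2 : 12 ≤ 2 ^ p := le_trans (by norm_num) (Nat.pow_le_pow_right (by norm_num) hp)
    have : 2 ^ (p + 1) = 2 ^ p + 2 ^ p := by ring
    omega

lemma trich : ∀ u v w : Fin 4, u ≠ v → v ≠ w → u ≠ w →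
    (u : ℕ) < 3 → (v : ℕ) < 3 → (w : ℕ) < 3 →
    (u = 2 ∨ v = 2 ∨ w = 2) ∧ (u = 0 ∨ v = 0 ∨ w = 0) ∧
    (u = 1 ∨ v = 1 ∨ w = 1) := by
  intro u v w
  fin_cases u <;> fin_cases v <;> fin_cases w <;> simp

lemma construction (n : ℕ) (hn : 2 ^ 18 ≤ n) :
    ∃ c : Sym2 (Fin n) → Fin 4, ¬ Has123Triangle c ∧
      ∀ X : Finset (Fin n), IsHomog c X →
        X.card ≤ 2 ^ (Nat.log 2 n / 3 + 1) *
          ((4 * Nat.log 2 n + 19) * (4 * Nat.log 2 n + 19)) := by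
  classical
  set L := Nat.log 2 n with hL
  set m := 2 ^ (L / 3 + 1) with hm
  set K := 4 * L + 19 with hK
  have hL18 : 18 ≤ L := by
    rw [hL, Nat.le_log_iff_pow_le (by norm_num) (by positivity)]
    exact hn
  obtain ⟨q₁, hq₁⟩ := ramsey3 m
  obtain ⟨q₂, hq₂⟩ := ramsey3 m
  obtain ⟨q₃, hq₃⟩ := ramsey3 m
  have hlogm : Nat.log 2 m = L / 3 + 1 := by rw [hm, Nat.log_pow (by norm_num)]
  have hkb : 4 * Nat.log 2 m + 19 ≤ K := by rw [hlogm, hK]; omega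
  have hKm : K ≤ m := by
    have h1 : K ≤ 12 * (L / 3 + 1) + 19 := by rw [hK]; omega
    have h2 : 12 * (L / 3 + 1) + 19 ≤ 2 ^ (L / 3 + 1) := twelve_le_pow _ (by omega)
    rw [hm]; omega
  have hnm : n ≤ m * (m * m) := by
    have h1 : n < 2 ^ (L + 1) := Nat.lt_pow_succ_log_self (by norm_num) n
    have h2 : 2 ^ (L + 1) ≤ m * (m * m) := by
      rw [hm, ← pow_add, ← pow_add]
      exact Nat.pow_le_pow_right (by norm_num) (by omega)
    omega
  -- the injection into a triple product
  set ι : Fin n → Fin m × (Fin m × Fin m) :=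
    (Equiv.prodCongr (Equiv.refl (Fin m)) finProdFinEquiv.symm) ∘
      (finProdFinEquiv (m := m) (n := m * m)).symm ∘ Fin.castLE hnm with hι
  have hιinj : Function.Injective ι := by
    rw [hι]
    exact (Equiv.injective _).comp ((Equiv.injective _).comp (Fin.castLE_injective hnm))
  set a : Fin n → Fin m := fun x => (ι x).1 with ha
  set b : Fin n → Fin m := fun x => (ι x).2.1 with hb
  set d : Fin n → Fin m := fun x => (ι x).2.2 with hd
  have habd : ∀ x y : Fin n, a x = a y → b x = b y → d x = d y → x = y := by
    intro x y h1 h2 h3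
    apply hιinj
    exact Prod.ext h1 (Prod.ext h2 h3)
  set f : Fin n → Fin n → Fin 4 := fun x y =>
    if a x = a y then
      (if b x = b y then emap3 (q₃ s(d x, d y)) else emap2 (q₂ s(b x, b y)))
    else emap1 (q₁ s(a x, a y)) with hf
  have f1 : ∀ x y, a x ≠ a y → f x y = emap1 (q₁ s(a x, a y)) := by
    intro x y h; rw [hf]; simp [h]
  have f2 : ∀ x y, a x = a y → b x ≠ b y → f x y = emap2 (q₂ s(b x, b y)) := by
    intro x y h h'; rw [hf]; simp [h, h']
  have f3 : ∀ x y, a x = a y → b x = b y → f x y = emap3 (q₃ s(d x, d y)) := by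
    intro x y h h'; rw [hf]; simp [h, h']
  have hsymm : ∀ x y, f x y = f y x := by
    intro x y
    rcases eq_or_ne (a x) (a y) with h | h
    · rcases eq_or_ne (b x) (b y) with h' | h'
      · rw [f3 x y h h', f3 y x h.symm h'.symm, Sym2.eq_swap]
      · rw [f2 x y h h', f2 y x h.symm h'.symm, Sym2.eq_swap]
    · rw [f1 x y h, f1 y x h.symm, Sym2.eq_swap]
  set c : Sym2 (Fin n) → Fin 4 := Sym2.lift ⟨f, hsymm⟩ with hcdef
  have hc : ∀ x y, c s(x, y) = f x y := fun x y => rfl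
  have e1ne : ∀ v, emap1 v ≠ 2 := by decide
  have e2ne : ∀ v, emap2 v ≠ 0 := by decide
  have e3ne : ∀ v, emap3 v ≠ 1 := by decide
  refine ⟨c, ?_, ?_⟩
  · -- no rainbow triangle
    rintro ⟨x, y, z, hxy, hyz, hxz, d1, d2, d3, l1, l2, l3⟩
    rw [hc] at d1 d2 d3 l1 l2 l3
    rw [hc] at d1 d2 d3  -- harmless
    obtain ⟨h2, h0, h1⟩ := trich _ _ _ d1 d2 d3 l1 l2 l3
    rcases eq_or_ne (a x) (a y) with haxy | haxy
    · rcases eq_or_ne (a y) (a z) with hayz | hayz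
      · -- all a equal : go to level b
        have haxz : a x = a z := haxy.trans hayz
        rcases eq_or_ne (b x) (b y) with hbxy | hbxy
        · rcases eq_or_ne (b y) (b z) with hbyz | hbyz
          · -- all b equal : all edges are emap3, but some edge = 1
            have hbxz : b x = b z := hbxy.trans hbyz
            rcases h1 with h | h | h
            · rw [f3 x y haxy hbxy] at h; exact e3ne _ h
            · rw [f3 y z hayz hbyz] at h; exact e3ne _ h
            · rw [f3 x z haxz hbxz] at h; exact e3ne _ h
          · -- b x = b y ≠ b z: f x z = f y z
            have hbxz : b x ≠ b z := hbxy ▸ hbyz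
            apply d2
            rw [f2 y z hayz hbyz, f2 x z haxz hbxz, hbxy]
        · rcases eq_or_ne (b y) (b z) with hbyz | hbyz
          · -- b y = b z : f x y = f x z
            apply d3
            rw [f2 x y haxy hbxy, f2 x z haxz (fun hh => hbxy (hh.trans hbyz.symm)), hbyz]
          · rcases eq_or_ne (b x) (b z) with hbxz | hbxz
            · -- b x = b z : f x y = f y z
              apply d1
              rw [f2 x y haxy hbxy, f2 y z hayz hbyz, hbxz, Sym2.eq_swap]
            · -- all b distinct : all edges emap2, but some edge = 0
              rcases h0 with h | h | h
              · rw [f2 x y haxy hbxy] at h; exact e2ne _ h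
              · rw [f2 y z hayz hbyz] at h; exact e2ne _ h
              · rw [f2 x z haxz hbxz] at h; exact e2ne _ h
      · -- a x = a y ≠ a z : f x z = f y z
        have haxz : a x ≠ a z := haxy ▸ hayz
        apply d2
        rw [f1 y z hayz, f1 x z haxz, haxy]
    · rcases eq_or_ne (a y) (a z) with hayz | hayz
      · -- a y = a z : f x y = f x z
        apply d3
        rw [f1 x y haxy, f1 x z (fun hh => haxy (hh.trans hayz.symm)), hayz]
      · rcases eq_or_ne (a x) (a z) with haxz | haxz
        · -- a x = a z : f x y = f y z
          apply d1
          rw [f1 x y haxy, f1 y z hayz, haxz, Sym2.eq_swap]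
        · -- all a distinct : all edges emap1, but some edge = 2
          rcases h2 with h | h | h
          · rw [f1 x y haxy] at h; exact e1ne _ h
          · rw [f1 y z hayz] at h; exact e1ne _ h
          · rw [f1 x z haxz] at h; exact e1ne _ h
  · -- homogeneous sets are small
    rintro X ⟨j, hj⟩
    -- per-level bounds
    have B1free : (X.image a).card ≤ m := by
      have := (X.image a).card_le_univ
      simpa [card_univ] using this
    have B2free : ∀ α : Fin m, ((X.filter (fun x => a x = α)).image b).card ≤ m := by
      intro α
      have := ((X.filter (fun x => a x = α)).image b).card_le_univ
      simpa [card_univ] using this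
    have inner_eq : ∀ α β : Fin m,
        ((X.filter (fun x => a x = α)).filter (fun x => b x = β)).card =
        (((X.filter (fun x => a x = α)).filter (fun x => b x = β)).image d).card := by
      intro α β
      refine (Finset.card_image_of_injOn ?_).symm
      intro x hx y hy hdxy
      simp only [coe_filter, Set.mem_setOf_eq, mem_filter] at hx hy
      exact habd x y (hx.1.2.trans hy.1.2.symm) (hx.2.trans hy.2.symm) hdxy
    have B3free : ∀ α β : Fin m,
        ((X.filter (fun x => a x = α)).filter (fun x => b x = β)).card ≤ m := by
      intro α β
      rw [inner_eq α β]
      have := (((X.filter (fun x => a x = α)).filter (fun x => b x = β)).image d).card_le_univ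
      simpa [card_univ] using this
    have lvl1 : ∀ i1 : Fin 3, emap1 i1 = j → (X.image a).card ≤ K := by
      intro i1 hi1
      refine le_trans (hq₁ (X.image a) i1 ?_) hkb
      intro α hα β hβ hne
      obtain ⟨x, hx, rfl⟩ := mem_image.mp hα
      obtain ⟨y, hy, rfl⟩ := mem_image.mp hβ
      have hxy : x ≠ y := by rintro rfl; exact hne rfl
      have h := hj x hx y hy hxy
      rw [hc, f1 x y hne] at h
      intro he
      exact h (by rw [he, hi1])
    have lvl2 : ∀ i2 : Fin 3, emap2 i2 = j →
        ∀ α : Fin m, ((X.filter (fun x => a x = α)).image b).card ≤ K := by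
      intro i2 hi2 α
      refine le_trans (hq₂ _ i2 ?_) hkb
      intro β hβ γ hγ hne
      obtain ⟨x, hx, rfl⟩ := mem_image.mp hβ
      obtain ⟨y, hy, rfl⟩ := mem_image.mp hγ
      rw [mem_filter] at hx hy
      have hxy : x ≠ y := by rintro rfl; exact hne rfl
      have h := hj x hx.1 y hy.1 hxy
      rw [hc, f2 x y (hx.2.trans hy.2.symm) hne] at h
      intro he
      exact h (by rw [he, hi2])
    have lvl3 : ∀ i3 : Fin 3, emap3 i3 = j →
        ∀ α β : Fin m, ((X.filter (fun x => a x = α)).filter (fun x => b x = β)).card ≤ K := by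
      intro i3 hi3 α β
      rw [inner_eq α β]
      refine le_trans (hq₃ _ i3 ?_) hkb
      intro δ hδ ε hε hne
      obtain ⟨x, hx, rfl⟩ := mem_image.mp hδ
      obtain ⟨y, hy, rfl⟩ := mem_image.mp hε
      simp only [mem_filter] at hx hy
      have hxy : x ≠ y := by rintro rfl; exact hne rfl
      have h := hj x hx.1.1 y hy.1.1 hxy
      rw [hc, f3 x y (hx.1.2.trans hy.1.2.symm) (hx.2.trans hy.2.symm)] at h
      intro he
      exact h (by rw [he, hi3])
    -- combine the three levels
    have main : ∀ B1 B2 B3 : ℕ, (X.image a).card ≤ B1 →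
        (∀ α, ((X.filter (fun x => a x = α)).image b).card ≤ B2) →
        (∀ α β, ((X.filter (fun x => a x = α)).filter (fun x => b x = β)).card ≤ B3) →
        X.card ≤ B1 * (B2 * B3) := by
      intro B1 B2 B3 h1 h2 h3
      have step1 : X.card ≤ (B2 * B3) * (X.image a).card := by
        apply Finset.card_le_mul_card_image
        intro α hα
        calc (X.filter (fun x => a x = α)).card
            ≤ B3 * ((X.filter (fun x => a x = α)).image b).card := by
              apply Finset.card_le_mul_card_image
              intro β hβ
              exact h3 α β
          _ ≤ B3 * B2 := Nat.mul_le_mul_left _ (h2 α)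
          _ = B2 * B3 := mul_comm _ _
      calc X.card ≤ (B2 * B3) * (X.image a).card := step1
        _ ≤ (B2 * B3) * B1 := Nat.mul_le_mul_left _ h1
        _ = B1 * (B2 * B3) := mul_comm _ _
    have goal_eq : 2 ^ (Nat.log 2 n / 3 + 1) *
        ((4 * Nat.log 2 n + 19) * (4 * Nat.log 2 n + 19)) = m * (K * K) := by
      rw [hm, hK, hL]
    rw [goal_eq]
    fin_cases j
    · -- j = 0 : level 1 via emap1 0 = 0, level 3 via emap3 1 = 0, level 2 free
      calc X.card ≤ K * (m * K) :=
            main K m K (lvl1 0 (by decide)) B2free (lvl3 1 (by decide))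
        _ = m * (K * K) := by ring
    · -- j = 1 : level 1 via emap1 1 = 1, level 2 via emap2 0 = 1, level 3 free
      calc X.card ≤ K * (K * m) :=
            main K K m (lvl1 1 (by decide)) (lvl2 0 (by decide)) B3free
        _ = m * (K * K) := by ring
    · -- j = 2 : level 2 via emap2 1 = 2, level 3 via emap3 0 = 2, level 1 free
      exact main m K K B1free (lvl2 1 (by decide)) (lvl3 0 (by decide))
    · -- j = 3 : all three levels
      calc X.card ≤ K * (K * K) :=
            main K K K (lvl1 2 (by decide)) (lvl2 2 (by decide)) (lvl3 2 (by decide))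
        _ ≤ m * (K * K) := Nat.mul_le_mul_right _ hKm

theorem stmt7 :
    ∃ C : ℝ, 0 < C ∧ ∃ N : ℕ, ∀ n : ℕ, N ≤ n →
      ∃ c : Sym2 (Fin n) → Fin 4, ¬ Has123Triangle c ∧
        ∀ X : Finset (Fin n), IsHomog c X →
          (X.card : ℝ) ≤ C * (n : ℝ) ^ ((1 : ℝ) / 3) * (Real.logb 2 n) ^ 2 := by
  refine ⟨1058, by norm_num, 2 ^ 18, fun n hn => ?_⟩
  obtain ⟨c, hc1, hc2⟩ := construction n hn
  refine ⟨c, hc1, fun X hX => ?_⟩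
  have hcard := hc2 X hX
  set L := Nat.log 2 n with hL
  set m := 2 ^ (L / 3 + 1) with hm
  set K := 4 * L + 19 with hK
  have hm3 : m ^ 3 ≤ 8 * n := by
    calc m ^ 3 = 2 ^ (3 * (L / 3) + 3) := by rw [hm, ← pow_mul]; ring_nf
      _ ≤ 2 ^ (L + 3) := Nat.pow_le_pow_right (by norm_num) (by omega)
      _ = 8 * 2 ^ L := by rw [pow_add]; ring
      _ ≤ 8 * n := Nat.mul_le_mul_left _ (Nat.pow_log_le_self 2 (by positivity))
  have hmr : (m : ℝ) ≤ 2 * (n : ℝ) ^ ((1 : ℝ) / 3) := by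
    have h3 : ((m : ℝ)) ^ (3 : ℕ) ≤ 8 * (n : ℝ) := by exact_mod_cast hm3
    have hm0 : (0 : ℝ) ≤ (m : ℝ) := Nat.cast_nonneg m
    have e1 : (m : ℝ) = ((m : ℝ) ^ (3 : ℕ)) ^ ((1 : ℝ) / 3) := by
      rw [← Real.rpow_natCast (m : ℝ) 3, ← Real.rpow_mul hm0]
      norm_num
    rw [e1]
    calc ((m : ℝ) ^ (3 : ℕ)) ^ ((1 : ℝ) / 3)
        ≤ (8 * (n : ℝ)) ^ ((1 : ℝ) / 3) :=
          Real.rpow_le_rpow (by positivity) h3 (by norm_num)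
      _ = 2 * (n : ℝ) ^ ((1 : ℝ) / 3) := by
          rw [Real.mul_rpow (by norm_num) (Nat.cast_nonneg n)]
          congr 1
          rw [show (8 : ℝ) = 2 ^ (3 : ℕ) by norm_num, ← Real.rpow_natCast 2 3,
            ← Real.rpow_mul (by norm_num)]
          norm_num
  have hlogb1 : 1 ≤ Real.logb 2 n := by
    rw [Real.le_logb_iff_rpow_le (by norm_num) (by positivity), Real.rpow_one]
    exact_mod_cast le_trans (by norm_num : (2 : ℕ) ≤ 2 ^ 18) hn
  have hKr : (K : ℝ) ≤ 23 * Real.logb 2 n := by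
    have hLn : (L : ℝ) ≤ Real.logb 2 n := by
      have := Real.natLog_le_logb n 2
      rw [← hL] at this
      exact this
    push_cast [hK]
    linarith
  calc (X.card : ℝ) ≤ (m : ℝ) * ((K : ℝ) * (K : ℝ)) := by exact_mod_cast hcard
    _ ≤ (2 * (n : ℝ) ^ ((1 : ℝ) / 3)) * ((23 * Real.logb 2 n) * (23 * Real.logb 2 n)) := by
        apply mul_le_mul hmr ?_ (by positivity) (by positivity)
        exact mul_le_mul hKr hKr (by positivity) (by linarith)
    _ = 1058 * (n : ℝ) ^ ((1 : ℝ) / 3) * (Real.logb 2 n) ^ 2 := by ring
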